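/- Let g : ℝ → ℝ be a measurable function that is periodic with period p > 0, satisfies g(x) = −g(x + p/2) for all x ∈ ℝ, and satisfies |g(x)| ≤ 1 for all x. Let h : ℝ → ℝ be a nonnegative Lebesgue-integrable function, let c_1 ≠ 0 and c_2 be real constants, and let [a_2, b_2] be an interval on which h is monotonically decreasing. Then |∫_{a_2}^{b_2} g(c_1 x + c_2) h(x) dx| ≤ ∫_{a_2}^{a_2 + p/(2|c_1|)} h(x) dx. -/

import Mathlib

open MeasureTheory intervalIntegral

section Aux

variable {f h : ℝ → ℝ} {T : ℝ}

private lemma aux_abs_le {F G : ℝ → ℝ} {a b : ℝ} (hab : a ≤ b)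
    (hF : IntervalIntegrable F volume a b) (hG : IntervalIntegrable G volume a b)
    (hpt : ∀ x ∈ Set.Icc a b, |F x| ≤ G x) :
    |∫ x in a..b, F x| ≤ ∫ x in a..b, G x := by
  calc |∫ x in a..b, F x| ≤ ∫ x in a..b, |F x| :=
        intervalIntegral.abs_integral_le_integral_abs hab
    _ ≤ ∫ x in a..b, G x := intervalIntegral.integral_mono_on hab hF.abs hG hpt

private lemma aux_split (hfanti : ∀ x, f (x + T) = -f x)
    (hInt : Integrable (fun x => f x * h x))
    (hInt2 : Integrable (fun x => f x * h (x + T))) (a c b : ℝ) :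
    ∫ x in a..b, f x * h x =
      (∫ x in a..c, f x * (h x - h (x + T))) + (∫ x in c..b, f x * h x)
        - ∫ x in (a + T)..(c + T), f x * h x := by
  have h1 : ∫ x in (a + T)..(c + T), f x * h x = ∫ x in a..c, f (x + T) * h (x + T) :=
    (intervalIntegral.integral_comp_add_right (fun x => f x * h x) T).symm
  have h2 : ∫ x in a..c, f (x + T) * h (x + T) = -∫ x in a..c, f x * h (x + T) := by
    simp [hfanti, neg_mul]
  have h3 : ∫ x in a..c, f x * (h x - h (x + T)) =
      (∫ x in a..c, f x * h x) - ∫ x in a..c, f x * h (x + T) := by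
    simp only [mul_sub]
    exact intervalIntegral.integral_sub hInt.intervalIntegrable hInt2.intervalIntegrable
  have h4 : (∫ x in a..c, f x * h x) + ∫ x in c..b, f x * h x = ∫ x in a..b, f x * h x :=
    intervalIntegral.integral_add_adjacent_intervals hInt.intervalIntegrable
      hInt.intervalIntegrable
  rw [h1, h2, h3]
  linarith

/-- Key lemma: antiperiodic `f` bounded by 1 against a nonneg function `h`
antitone on `[a,b]`. -/
private lemma aux_key (hT : 0 < T)
    (hf : Measurable f) (hfanti : ∀ x, f (x + T) = -f x) (hfb : ∀ x, |f x| ≤ 1)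
    (hh : ∀ x, 0 ≤ h x) (hhint : Integrable h) :
    ∀ n : ℕ, ∀ a b : ℝ, a ≤ b → b ≤ a + (2 * n + 2) * T → AntitoneOn h (Set.Icc a b) →
      |∫ x in a..b, f x * h x| ≤ ∫ x in a..(min b (a + T)), h x := by
  -- global integrability facts
  have hhT : Integrable (fun x => h (x + T)) := hhint.comp_add_right T
  have habs : ∀ x : ℝ, |f x * h x| ≤ h x := by
    intro x
    rw [abs_mul, abs_of_nonneg (hh x)]
    exact mul_le_of_le_one_left (hh x) (hfb x)
  have hInt : Integrable (fun x => f x * h x) :=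
    hhint.mono (hf.aestronglyMeasurable.mul hhint.aestronglyMeasurable)
      (Filter.Eventually.of_forall fun x => by
        rw [Real.norm_eq_abs, Real.norm_eq_abs, abs_of_nonneg (hh x)]; exact habs x)
  have hInt2 : Integrable (fun x => f x * h (x + T)) :=
    hhT.mono (hf.aestronglyMeasurable.mul hhT.aestronglyMeasurable)
      (Filter.Eventually.of_forall fun x => by
        rw [Real.norm_eq_abs, Real.norm_eq_abs, abs_mul, abs_of_nonneg (hh _)]
        exact mul_le_of_le_one_left (hh _) (hfb x))
  have hIntSub : Integrable (fun x => f x * (h x - h (x + T))) := by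
    have : (fun x => f x * (h x - h (x + T)))
        = fun x => f x * h x - f x * h (x + T) := by
      funext x; ring
    rw [this]; exact hInt.sub hInt2
  -- a basic bound used in several places
  have hbase : ∀ a b : ℝ, a ≤ b → |∫ x in a..b, f x * h x| ≤ ∫ x in a..b, h x := by
    intro a b hab
    exact aux_abs_le hab hInt.intervalIntegrable hhint.intervalIntegrable
      (fun x _ => habs x)
  -- extension of nonneg integral
  have hext : ∀ a m m' : ℝ, a ≤ m → m ≤ m' →
      ∫ x in a..m, h x ≤ ∫ x in a..m', h x := by
    intro a m m' h1 h2
    have := intervalIntegral.integral_add_adjacent_intervals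
      (μ := volume) (f := h) (a := a) (b := m) (c := m')
      hhint.intervalIntegrable hhint.intervalIntegrable
    have hnn : 0 ≤ ∫ x in m..m', h x :=
      intervalIntegral.integral_nonneg h2 (fun x _ => hh x)
    linarith
  intro n
  induction n with
  | zero =>
    intro a b hab hbd hanti
    by_cases hb : b ≤ a + T
    · rw [min_eq_left hb]
      exact hbase a b hab
    · push_neg at hb
      rw [min_eq_right hb.le]
      -- case a + T < b ≤ a + 2T : use split with c = b - T
      rw [aux_split hfanti hInt hInt2 a (b - T) b]
      have e1 : b - T + T = b := by ring
      rw [e1]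
      have habT : a ≤ b - T := by linarith
      have hbTaT : b - T ≤ a + T := by
        have : b ≤ a + (2 * (0:ℕ) + 2) * T := hbd
        push_cast at this; linarith
      -- ∫_{b}..b = 0 ; rewrite ∫_{b-T}^b - ∫_{a+T}^b
      have e2 : (∫ x in (b - T)..b, f x * h x) - ∫ x in (a + T)..b, f x * h x
          = ∫ x in (b - T)..(a + T), f x * h x := by
        have := intervalIntegral.integral_add_adjacent_intervals
          (μ := volume) (f := fun x => f x * h x) (a := b - T) (b := a + T) (c := b)
          hInt.intervalIntegrable hInt.intervalIntegrable
        linarith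
      rw [add_sub_assoc, e2]
      have bnd1 : |∫ x in a..(b - T), f x * (h x - h (x + T))|
          ≤ (∫ x in a..(b - T), h x) - ∫ x in (a + T)..b, h x := by
        have hsb : ∫ x in a..(b - T), h (x + T) = ∫ x in (a + T)..b, h x := by
          have := intervalIntegral.integral_comp_add_right (a := a) (b := b - T) h T
          rw [this, e1]
        have : |∫ x in a..(b - T), f x * (h x - h (x + T))|
            ≤ ∫ x in a..(b - T), (h x - h (x + T)) := by
          apply aux_abs_le habT hIntSub.intervalIntegrable
            (hhint.sub hhT).intervalIntegrable
          intro x hx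
          rw [abs_mul]
          have hx1 : x ∈ Set.Icc a b := ⟨hx.1, by linarith [hx.2]⟩
          have hx2 : x + T ∈ Set.Icc a b := ⟨by linarith [hx.1], by linarith [hx.2]⟩
          have hmono : h (x + T) ≤ h x := hanti hx1 hx2 (by linarith)
          rw [abs_of_nonneg (by linarith : (0:ℝ) ≤ h x - h (x + T))]
          exact mul_le_of_le_one_left (by linarith) (hfb x)
        have hsub : ∫ x in a..(b - T), (h x - h (x + T))
            = (∫ x in a..(b - T), h x) - ∫ x in a..(b - T), h (x + T) :=
          intervalIntegral.integral_sub hhint.intervalIntegrable hhT.intervalIntegrable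
        rw [hsub, hsb] at this
        exact this
      have bnd2 : |∫ x in (b - T)..(a + T), f x * h x| ≤ ∫ x in (b - T)..(a + T), h x :=
        hbase _ _ hbTaT
      have e3 : (∫ x in a..(b - T), h x) + ∫ x in (b - T)..(a + T), h x
          = ∫ x in a..(a + T), h x :=
        intervalIntegral.integral_add_adjacent_intervals hhint.intervalIntegrable
          hhint.intervalIntegrable
      have hnn : 0 ≤ ∫ x in (a + T)..b, h x :=
        intervalIntegral.integral_nonneg (by linarith) (fun x _ => hh x)
      calc |(∫ x in a..(b - T), f x * (h x - h (x + T)))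
              + (∫ x in (b - T)..(a + T), f x * h x)|
          ≤ |∫ x in a..(b - T), f x * (h x - h (x + T))|
            + |∫ x in (b - T)..(a + T), f x * h x| := abs_add_le _ _
        _ ≤ ∫ x in a..(a + T), h x := by linarith
  | succ n ih =>
    intro a b hab hbd hanti
    by_cases hb : b ≤ a + 2 * T
    · -- handled exactly like the base case (b ≤ a + 2T)
      have h0 : b ≤ a + (2 * (0:ℕ) + 2) * T := by push_cast; linarith
      -- reuse: re-run zero-case argument via recursion isn't possible; inline:
      by_cases hb1 : b ≤ a + T
      · rw [min_eq_left hb1]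
        exact hbase a b hab
      · push_neg at hb1
        rw [min_eq_right hb1.le]
        rw [aux_split hfanti hInt hInt2 a (b - T) b]
        have e1 : b - T + T = b := by ring
        rw [e1]
        have habT : a ≤ b - T := by linarith
        have hbTaT : b - T ≤ a + T := by linarith
        have e2 : (∫ x in (b - T)..b, f x * h x) - ∫ x in (a + T)..b, f x * h x
            = ∫ x in (b - T)..(a + T), f x * h x := by
          have := intervalIntegral.integral_add_adjacent_intervals
            (μ := volume) (f := fun x => f x * h x) (a := b - T) (b := a + T) (c := b)
            hInt.intervalIntegrable hInt.intervalIntegrable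
          linarith
        rw [add_sub_assoc, e2]
        have bnd1 : |∫ x in a..(b - T), f x * (h x - h (x + T))|
            ≤ (∫ x in a..(b - T), h x) - ∫ x in (a + T)..b, h x := by
          have hsb : ∫ x in a..(b - T), h (x + T) = ∫ x in (a + T)..b, h x := by
            have := intervalIntegral.integral_comp_add_right (a := a) (b := b - T) h T
            rw [this, e1]
          have : |∫ x in a..(b - T), f x * (h x - h (x + T))|
              ≤ ∫ x in a..(b - T), (h x - h (x + T)) := by
            apply aux_abs_le habT hIntSub.intervalIntegrable
              (hhint.sub hhT).intervalIntegrable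
            intro x hx
            rw [abs_mul]
            have hx1 : x ∈ Set.Icc a b := ⟨hx.1, by linarith [hx.2]⟩
            have hx2 : x + T ∈ Set.Icc a b := ⟨by linarith [hx.1], by linarith [hx.2]⟩
            have hmono : h (x + T) ≤ h x := hanti hx1 hx2 (by linarith)
            rw [abs_of_nonneg (by linarith : (0:ℝ) ≤ h x - h (x + T))]
            exact mul_le_of_le_one_left (by linarith) (hfb x)
          have hsub : ∫ x in a..(b - T), (h x - h (x + T))
              = (∫ x in a..(b - T), h x) - ∫ x in a..(b - T), h (x + T) :=
            intervalIntegral.integral_sub hhint.intervalIntegrable hhT.intervalIntegrable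
          rw [hsub, hsb] at this
          exact this
        have bnd2 : |∫ x in (b - T)..(a + T), f x * h x| ≤ ∫ x in (b - T)..(a + T), h x :=
          hbase _ _ hbTaT
        have e3 : (∫ x in a..(b - T), h x) + ∫ x in (b - T)..(a + T), h x
            = ∫ x in a..(a + T), h x :=
          intervalIntegral.integral_add_adjacent_intervals hhint.intervalIntegrable
            hhint.intervalIntegrable
        have hnn : 0 ≤ ∫ x in (a + T)..b, h x :=
          intervalIntegral.integral_nonneg (by linarith) (fun x _ => hh x)
        calc |(∫ x in a..(b - T), f x * (h x - h (x + T)))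
                + (∫ x in (b - T)..(a + T), f x * h x)|
            ≤ |∫ x in a..(b - T), f x * (h x - h (x + T))|
              + |∫ x in (b - T)..(a + T), f x * h x| := abs_add_le _ _
          _ ≤ ∫ x in a..(a + T), h x := by linarith
    · push_neg at hb
      -- b > a + 2T : split with c = a + T, tail is ∫_{a+2T}^b, use ih
      rw [min_eq_right (by linarith : a + T ≤ b)]
      rw [aux_split hfanti hInt hInt2 a (a + T) b]
      have e1 : a + T + T = a + 2 * T := by ring
      rw [e1]
      have e2 : (∫ x in (a + T)..b, f x * h x) - ∫ x in (a + T)..(a + 2 * T), f x * h x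
          = ∫ x in (a + 2 * T)..b, f x * h x := by
        have := intervalIntegral.integral_add_adjacent_intervals
          (μ := volume) (f := fun x => f x * h x) (a := a + T) (b := a + 2 * T) (c := b)
          hInt.intervalIntegrable hInt.intervalIntegrable
        linarith
      rw [add_sub_assoc, e2]
      -- bound the head
      have bnd1 : |∫ x in a..(a + T), f x * (h x - h (x + T))|
          ≤ (∫ x in a..(a + T), h x) - ∫ x in (a + T)..(a + 2 * T), h x := by
        have hsb : ∫ x in a..(a + T), h (x + T) = ∫ x in (a + T)..(a + 2 * T), h x := by
          have := intervalIntegral.integral_comp_add_right (a := a) (b := a + T) h T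
          rw [this, e1]
        have : |∫ x in a..(a + T), f x * (h x - h (x + T))|
            ≤ ∫ x in a..(a + T), (h x - h (x + T)) := by
          apply aux_abs_le (by linarith) hIntSub.intervalIntegrable
            (hhint.sub hhT).intervalIntegrable
          intro x hx
          rw [abs_mul]
          have hx1 : x ∈ Set.Icc a b := ⟨hx.1, by linarith [hx.2]⟩
          have hx2 : x + T ∈ Set.Icc a b := ⟨by linarith [hx.1], by linarith [hx.2]⟩
          have hmono : h (x + T) ≤ h x := hanti hx1 hx2 (by linarith)
          rw [abs_of_nonneg (by linarith : (0:ℝ) ≤ h x - h (x + T))]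
          exact mul_le_of_le_one_left (by linarith) (hfb x)
        have hsub : ∫ x in a..(a + T), (h x - h (x + T))
            = (∫ x in a..(a + T), h x) - ∫ x in a..(a + T), h (x + T) :=
          intervalIntegral.integral_sub hhint.intervalIntegrable hhT.intervalIntegrable
        rw [hsub, hsb] at this
        exact this
      -- bound the tail via ih
      have hanti' : AntitoneOn h (Set.Icc (a + 2 * T) b) :=
        hanti.mono (Set.Icc_subset_Icc (by linarith) le_rfl)
      have htail : |∫ x in (a + 2 * T)..b, f x * h x|
          ≤ ∫ x in (a + 2 * T)..(min b (a + 2 * T + T)), h x := by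
        apply ih (a + 2 * T) b hb.le _ hanti'
        have : b ≤ a + (2 * (n + 1 : ℕ) + 2) * T := hbd
        push_cast at this ⊢
        linarith
      -- compare tail bound with ∫_{a+T}^{a+2T} h
      set m := min b (a + 2 * T + T) with hm
      have hm1 : a + 2 * T ≤ m := le_min hb.le (by linarith)
      have hm2 : m ≤ b := min_le_left _ _
      have hm3 : m ≤ a + 2 * T + T := min_le_right _ _
      have hcmp : ∫ x in (a + 2 * T)..m, h x ≤ ∫ x in (a + T)..(a + 2 * T), h x := by
        have hsb : ∫ x in (a + T)..(m - T), h (x + T) = ∫ x in (a + 2 * T)..m, h x := by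
          have := intervalIntegral.integral_comp_add_right (a := a + T) (b := m - T) h T
          rw [this]
          congr 1 <;> ring
        have step1 : ∫ x in (a + T)..(m - T), h (x + T)
            ≤ ∫ x in (a + T)..(m - T), h x := by
          apply intervalIntegral.integral_mono_on (by linarith)
            hhT.intervalIntegrable hhint.intervalIntegrable
          intro x hx
          have hx1 : x ∈ Set.Icc a b := ⟨by linarith [hx.1], by linarith [hx.2]⟩
          have hx2 : x + T ∈ Set.Icc a b := ⟨by linarith [hx.1], by linarith [hx.2]⟩
          exact hanti hx1 hx2 (by linarith)
        have step2 : ∫ x in (a + T)..(m - T), h x ≤ ∫ x in (a + T)..(a + 2 * T), h x :=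
          hext (a + T) (m - T) (a + 2 * T) (by linarith) (by linarith)
        linarith [hsb]
      calc |(∫ x in a..(a + T), f x * (h x - h (x + T)))
              + ∫ x in (a + 2 * T)..b, f x * h x|
          ≤ |∫ x in a..(a + T), f x * (h x - h (x + T))|
            + |∫ x in (a + 2 * T)..b, f x * h x| := abs_add_le _ _
        _ ≤ ∫ x in a..(a + T), h x := by linarith

end Aux

/-- If `g` is periodic with period `p > 0`, antiperiodic with antiperiod `p/2`,
bounded by `1`, and `h` is a nonnegative integrable function that is monotonically
decreasing on `[a₂, b₂]`, then
`|∫_{a₂}^{b₂} g (c₁ x + c₂) h x dx| ≤ ∫_{a₂}^{a₂ + p/(2|c₁|)} h x dx`. -/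
theorem abs_integral_mul_le_of_antitoneOn
    (g h : ℝ → ℝ) (p : ℝ) (hp : 0 < p)
    (hgmeas : Measurable g)
    (hgper : Function.Periodic g p)
    (hganti : ∀ x, g x = -g (x + p / 2))
    (hgbdd : ∀ x, |g x| ≤ 1)
    (hh : ∀ x, 0 ≤ h x) (hhint : Integrable h)
    (c₁ c₂ : ℝ) (hc₁ : c₁ ≠ 0)
    (a₂ b₂ : ℝ) (hab : a₂ ≤ b₂)
    (hanti : AntitoneOn h (Set.Icc a₂ b₂)) :
    |∫ x in a₂..b₂, g (c₁ * x + c₂) * h x| ≤ ∫ x in a₂..(a₂ + p / (2 * |c₁|)), h x := by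
  set T : ℝ := p / (2 * |c₁|) with hT_def
  have hc₁' : 0 < |c₁| := abs_pos.mpr hc₁
  have hT : 0 < T := div_pos hp (by linarith)
  set f : ℝ → ℝ := fun x => g (c₁ * x + c₂) with hf_def
  have hf : Measurable f := hgmeas.comp (by fun_prop)
  have hfb : ∀ x, |f x| ≤ 1 := fun x => hgbdd _
  have hfanti : ∀ x, f (x + T) = -f x := by
    intro x
    have hc1T : c₁ * T = c₁ / |c₁| * (p / 2) := by
      rw [hT_def]; field_simp
    rcases lt_or_gt_of_ne hc₁ with hneg | hpos
    · have habs : |c₁| = -c₁ := abs_of_neg hneg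
      have : c₁ * T = -(p / 2) := by
        rw [hc1T, habs]; field_simp
      show g (c₁ * (x + T) + c₂) = -g (c₁ * x + c₂)
      have harg : c₁ * (x + T) + c₂ = c₁ * x + c₂ - p / 2 := by
        rw [mul_add, this]; ring
      rw [harg]
      have := hganti (c₁ * x + c₂ - p / 2)
      rw [this]
      congr 1; congr 1; ring
    · have habs : |c₁| = c₁ := abs_of_pos hpos
      have : c₁ * T = p / 2 := by
        rw [hc1T, habs]; field_simp
      show g (c₁ * (x + T) + c₂) = -g (c₁ * x + c₂)
      have harg : c₁ * (x + T) + c₂ = c₁ * x + c₂ + p / 2 := by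
        rw [mul_add, this]; ring
      rw [harg, hganti (c₁ * x + c₂), neg_neg]
  -- pick n large enough
  obtain ⟨n, hn⟩ := exists_nat_gt ((b₂ - a₂) / T)
  have hbd : b₂ ≤ a₂ + (2 * n + 2) * T := by
    have h1 : (b₂ - a₂) / T < n := hn
    have h2 : b₂ - a₂ < n * T := by
      rw [div_lt_iff₀ hT] at h1; linarith
    have hnT : 0 ≤ (n : ℝ) * T := by positivity
    nlinarith [hT.le]
  have key := aux_key hT hf hfanti hfb hh hhint n a₂ b₂ hab hbd hanti
  have hle : ∫ x in a₂..(min b₂ (a₂ + T)), h x ≤ ∫ x in a₂..(a₂ + T), h x := by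
    have hm1 : a₂ ≤ min b₂ (a₂ + T) := le_min hab (by linarith)
    have hm2 : min b₂ (a₂ + T) ≤ a₂ + T := min_le_right _ _
    have := intervalIntegral.integral_add_adjacent_intervals
      (μ := volume) (f := h) (a := a₂) (b := min b₂ (a₂ + T)) (c := a₂ + T)
      hhint.intervalIntegrable hhint.intervalIntegrable
    have hnn : 0 ≤ ∫ x in (min b₂ (a₂ + T))..(a₂ + T), h x :=
      intervalIntegral.integral_nonneg hm2 (fun x _ => hh x)
    linarith
  exact key.trans hle
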